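/- For every real x ≥ 1 and every integer k ≥ 0, the function L(x;k) = Σ_{n=1}^{⌊x⌋} ( (log(n/x))^{2k}/((2k)!·√n) - (log(n/x))^{2k+2}/((2k+2)!·4·√n) ) is nonnegative. -/

import Mathlib

open Finset

namespace Stmt5Aux

noncomputable def Rf (k : ℕ) (u : ℝ) : ℝ :=
  u ^ (2*k) / (Nat.factorial (2*k)) - u ^ (2*k+2) / (Nat.factorial (2*k+2) * 4)

noncomputable def Rd (k : ℕ) (u : ℝ) : ℝ :=
  (2*k : ℝ) * u ^ (2*k-1) / (Nat.factorial (2*k))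
    - (2*k+2 : ℝ) * u ^ (2*k+1) / (Nat.factorial (2*k+2) * 4)

noncomputable def Qf (k : ℕ) (u : ℝ) : ℝ :=
  -(u ^ (2*k+1) / (Nat.factorial (2*k+1)) + u ^ (2*k+2) / (Nat.factorial (2*k+2) * 2))

noncomputable def Qd (k : ℕ) (u : ℝ) : ℝ :=
  -((2*k+1 : ℝ) * u ^ (2*k) / (Nat.factorial (2*k+1))
    + (2*k+2 : ℝ) * u ^ (2*k+1) / (Nat.factorial (2*k+2) * 2))

noncomputable def Pf (k : ℕ) (u : ℝ) : ℝ := Rd k u + Rf k u / 2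

noncomputable def qf (k : ℕ) (u : ℝ) : ℝ :=
  (2*k : ℝ) / (Nat.factorial (2*k)) + u / (2 * Nat.factorial (2*k))
    - u^2 / (4 * Nat.factorial (2*k+1)) - u^3 / (8 * Nat.factorial (2*k+2))

noncomputable def hf (k : ℕ) (x t : ℝ) : ℝ := Rf k (Real.log x - Real.log t) / Real.sqrt t

noncomputable def Ff (k : ℕ) (x t : ℝ) : ℝ := Real.sqrt t * Qf k (Real.log x - Real.log t)

lemma fact_pos' (n : ℕ) : (0:ℝ) < (Nat.factorial n : ℝ) := by
  exact_mod_cast Nat.factorial_pos n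

lemma hasDerivAt_Rf (k : ℕ) (u : ℝ) : HasDerivAt (Rf k) (Rd k u) u := by
  have h1 : HasDerivAt (fun u : ℝ => u ^ (2*k)) ((2*k : ℝ) * u ^ (2*k-1)) u := by
    simpa using hasDerivAt_pow (2*k) u
  have h2 : HasDerivAt (fun u : ℝ => u ^ (2*k+2)) ((2*k+2 : ℝ) * u ^ (2*k+1)) u := by
    simpa using hasDerivAt_pow (2*k+2) u
  exact (h1.div_const _).sub (h2.div_const _)

lemma hasDerivAt_Qf (k : ℕ) (u : ℝ) : HasDerivAt (Qf k) (Qd k u) u := by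
  have h1 : HasDerivAt (fun u : ℝ => u ^ (2*k+1)) ((2*k+1 : ℝ) * u ^ (2*k)) u := by
    simpa using hasDerivAt_pow (2*k+1) u
  have h2 : HasDerivAt (fun u : ℝ => u ^ (2*k+2)) ((2*k+2 : ℝ) * u ^ (2*k+1)) u := by
    simpa using hasDerivAt_pow (2*k+2) u
  have H := ((h1.div_const ((Nat.factorial (2*k+1) : ℕ) : ℝ)).add
      (h2.div_const (((Nat.factorial (2*k+2) : ℕ) : ℝ) * 2))).neg
  exact H

lemma hasDerivAt_u (x t : ℝ) (ht : 0 < t) :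
    HasDerivAt (fun t : ℝ => Real.log x - Real.log t) (-t⁻¹) t := by
  simpa using ((Real.hasDerivAt_log ht.ne').const_sub (Real.log x))

lemma hasDerivAt_Ff (k : ℕ) (x t : ℝ) (ht : 0 < t) :
    HasDerivAt (Ff k x) (hf k x t) t := by
  have hu := hasDerivAt_u x t ht
  have hQ : HasDerivAt (fun t : ℝ => Qf k (Real.log x - Real.log t))
      (Qd k (Real.log x - Real.log t) * (-t⁻¹)) t := (hasDerivAt_Qf k _).comp t hu
  have hs : HasDerivAt Real.sqrt (1 / (2 * Real.sqrt t)) t := Real.hasDerivAt_sqrt ht.ne'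
  have := hs.mul hQ
  have hst : Real.sqrt t > 0 := Real.sqrt_pos.mpr ht
  have hsq : Real.sqrt t * Real.sqrt t = t := Real.mul_self_sqrt ht.le
  convert this using 1
  · rfl
  · rfl
  · rfl
  set u := Real.log x - Real.log t
  have hQR : Qf k u / 2 - Qd k u = Rf k u := by
    have e1 : ((2*k+1 : ℕ) : ℝ) * (Nat.factorial (2*k)) = (Nat.factorial (2*k+1)) := by
      exact_mod_cast (Nat.factorial_succ (2*k)).symm
    have e2 : ((2*k+2 : ℕ) : ℝ) * (Nat.factorial (2*k+1)) = (Nat.factorial (2*k+2)) := by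
      exact_mod_cast (Nat.factorial_succ (2*k+1)).symm
    have f0 := (fact_pos' (2*k)).ne'
    have f1 := (fact_pos' (2*k+1)).ne'
    have f2 := (fact_pos' (2*k+2)).ne'
    push_cast at e1 e2
    rw [Qf, Qd, Rf, ← e1, ← e2, ← e1]
    have hk1 : (2*(k:ℝ)+1) ≠ 0 := by positivity
    have hk2 : (2*(k:ℝ)+2) ≠ 0 := by positivity
    field_simp
    ring
  rw [hf, ← hQR]
  field_simp
  linear_combination (2 * Qd k (Real.log x - Real.log t)) * hsq

lemma hasDerivAt_hf (k : ℕ) (x t : ℝ) (ht : 0 < t) :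
    HasDerivAt (hf k x) (-(Pf k (Real.log x - Real.log t)) / (Real.sqrt t * t)) t := by
  have hu := hasDerivAt_u x t ht
  have hR : HasDerivAt (fun t : ℝ => Rf k (Real.log x - Real.log t))
      (Rd k (Real.log x - Real.log t) * (-t⁻¹)) t := (hasDerivAt_Rf k _).comp t hu
  have hs : HasDerivAt Real.sqrt (1 / (2 * Real.sqrt t)) t := Real.hasDerivAt_sqrt ht.ne'
  have hst : (0:ℝ) < Real.sqrt t := Real.sqrt_pos.mpr ht
  have hsq : Real.sqrt t * Real.sqrt t = t := Real.mul_self_sqrt ht.le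
  have H := hR.div hs hst.ne'
  convert H using 1
  · rfl
  · rfl
  · rfl
  rw [Pf]
  field_simp
  linear_combination (-Rf k (Real.log x - Real.log t)) * hsq

lemma uPf_eq (k : ℕ) (u : ℝ) : u * Pf k u = u ^ (2*k) * qf k u := by
  have e2 : ((2*k+2 : ℕ) : ℝ) * (Nat.factorial (2*k+1)) = (Nat.factorial (2*k+2)) := by
    exact_mod_cast (Nat.factorial_succ (2*k+1)).symm
  push_cast at e2
  have f1 := (fact_pos' (2*k+1)).ne'
  have f2 := (fact_pos' (2*k+2)).ne'
  have f0 := (fact_pos' (2*k)).ne'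
  cases k with
  | zero =>
    rw [Pf, Rf, Rd, qf]
    norm_num [Nat.factorial]
    ring
  | succ j =>
    rw [Pf, Rf, Rd, qf, ← e2]
    have exp1 : 2*(j+1)-1 = 2*j+1 := by omega
    have exp2 : 2*(j+1) = 2*j+2 := by omega
    rw [exp1, exp2]
    have hk1 : (2*(j:ℝ)+3) ≠ 0 := by positivity
    push_cast
    field_simp
    ring

lemma qf_one_pos (k : ℕ) (u : ℝ) (hu0 : 0 < u) (hu1 : u ≤ 1) : 0 < qf k u := by
  have f0 := fact_pos' (2*k)
  have f1 := fact_pos' (2*k+1)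
  have f2 := fact_pos' (2*k+2)
  have le1 : (Nat.factorial (2*k) : ℝ) ≤ Nat.factorial (2*k+1) := by
    exact_mod_cast Nat.factorial_le (by omega)
  have le2 : (Nat.factorial (2*k) : ℝ) ≤ Nat.factorial (2*k+2) := by
    exact_mod_cast Nat.factorial_le (by omega)
  have h2 : u^2 ≤ u := by nlinarith
  have h3 : u^3 ≤ u := by nlinarith
  have m1 : u^2 / (4 * Nat.factorial (2*k+1)) ≤ u / (4 * Nat.factorial (2*k)) := by
    gcongr
  have m2 : u^3 / (8 * Nat.factorial (2*k+2)) ≤ u / (8 * Nat.factorial (2*k)) := by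
    gcongr
  have hA : (0:ℝ) ≤ (2*k : ℝ) / (Nat.factorial (2*k)) := by positivity
  have key : u / (2 * Nat.factorial (2*k)) - u / (4 * Nat.factorial (2*k))
      - u / (8 * Nat.factorial (2*k)) = u / (8 * Nat.factorial (2*k)) := by ring
  have pos : (0:ℝ) < u / (8 * Nat.factorial (2*k)) := by positivity
  rw [qf]
  linarith

lemma qf_chain (k : ℕ) (a b : ℝ) (ha : 0 < a) (hab : a ≤ b) (hb : 0 < qf k b) :
    0 < qf k a := by
  rcases le_or_gt a 1 with h1 | h1
  · exact qf_one_pos k a ha h1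
  rcases eq_or_lt_of_le hab with rfl | hab'
  · exact hb
  have q1 : 0 < qf k 1 := qf_one_pos k 1 one_pos le_rfl
  have f1 := fact_pos' (2*k+1)
  have f2 := fact_pos' (2*k+2)
  have key : (b-1) * qf k a = (b-a) * qf k 1 + (a-1) * qf k b
      + (b-a)*(a-1)*(b-1) * (1/(4 * Nat.factorial (2*k+1)))
      + (b-a)*(a-1)*(b-1)*(a+b+1) * (1/(8 * Nat.factorial (2*k+2))) := by
    rw [qf, qf, qf]
    field_simp
    ring
  nlinarith [mul_pos (sub_pos.mpr hab') q1, mul_nonneg (sub_pos.mpr h1).le hb.le,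
    mul_nonneg (mul_nonneg (mul_nonneg (sub_pos.mpr hab').le (sub_pos.mpr h1).le)
      (by linarith : (0:ℝ) ≤ b - 1)) (by positivity : (0:ℝ) ≤ 1/(4 * (Nat.factorial (2*k+1):ℝ))),
    mul_nonneg (mul_nonneg (mul_nonneg (mul_nonneg (sub_pos.mpr hab').le (sub_pos.mpr h1).le)
      (by linarith : (0:ℝ) ≤ b - 1)) (by linarith : (0:ℝ) ≤ a + b + 1))
      (by positivity : (0:ℝ) ≤ 1/(8 * (Nat.factorial (2*k+2):ℝ)))]

lemma Pf_nonpos (k : ℕ) (u : ℝ) (hu : 0 < u) (hq : qf k u ≤ 0) : Pf k u ≤ 0 := by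
  have h := uPf_eq k u
  have hp : (0:ℝ) < u ^ (2*k) := pow_pos hu _
  nlinarith [mul_nonneg hp.le (neg_nonneg.mpr hq)]

lemma Pf_nonneg' (k : ℕ) (u : ℝ) (hu : 0 < u) (hq : 0 ≤ qf k u) : 0 ≤ Pf k u := by
  have h := uPf_eq k u
  have hp : (0:ℝ) < u ^ (2*k) := pow_pos hu _
  nlinarith [mul_nonneg hp.le hq]

lemma Pf_zero_nonneg (k : ℕ) : 0 ≤ Pf k 0 := by
  cases k with
  | zero => norm_num [Pf, Rf, Rd, Nat.factorial]
  | succ j =>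
    have e1 : 2*(j+1)-1 = 2*j+1 := by omega
    rw [Pf, Rf, Rd, e1]
    norm_num

lemma Rf_nonneg (k : ℕ) (u : ℝ) (hu0 : 0 ≤ u) (hu1 : u ≤ 1) : 0 ≤ Rf k u := by
  have f0 := fact_pos' (2*k)
  have f2 := fact_pos' (2*k+2)
  have le2 : (Nat.factorial (2*k) : ℝ) ≤ Nat.factorial (2*k+2) * 4 := by
    have : (Nat.factorial (2*k) : ℝ) ≤ Nat.factorial (2*k+2) := by
      exact_mod_cast Nat.factorial_le (by omega)
    linarith
  have hpow : u ^ (2*k+2) ≤ u ^ (2*k) := pow_le_pow_of_le_one hu0 hu1 (by omega)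
  have : u ^ (2*k+2) / (Nat.factorial (2*k+2) * 4) ≤ u ^ (2*k) / (Nat.factorial (2*k)) := by
    apply div_le_div₀ (by positivity) hpow f0 le2
  rw [Rf]
  linarith

lemma mono_region (k : ℕ) (x a b : ℝ) (ha : 1 ≤ a) (hbx : b < x)
    (hsign : ∀ t, a ≤ t → t ≤ b → qf k (Real.log x - Real.log t) ≤ 0) :
    MonotoneOn (hf k x) (Set.Icc a b) := by
  apply monotoneOn_of_deriv_nonneg (convex_Icc a b)
  · intro t ht
    exact (hasDerivAt_hf k x t (by linarith [ht.1] : (0:ℝ) < t)).continuousAt.continuousWithinAt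
  · rw [interior_Icc]
    intro t ht
    exact (hasDerivAt_hf k x t (by linarith [ht.1] : (0:ℝ) < t)).differentiableAt.differentiableWithinAt
  · rw [interior_Icc]
    intro t ht
    have htpos : (0:ℝ) < t := by linarith [ht.1]
    rw [(hasDerivAt_hf k x t htpos).deriv]
    have hu : 0 < Real.log x - Real.log t := by
      have : Real.log t < Real.log x := Real.log_lt_log htpos (by linarith [ht.2])
      linarith
    have hq : qf k (Real.log x - Real.log t) ≤ 0 := hsign t (le_of_lt ht.1) (le_of_lt ht.2)
    apply div_nonneg (neg_nonneg.mpr (Pf_nonpos k _ hu hq)) (by positivity)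

lemma anti_region (k : ℕ) (x a b : ℝ) (ha : 1 ≤ a)
    (hsign : ∀ t, a ≤ t → t ≤ b → 0 ≤ Pf k (Real.log x - Real.log t)) :
    AntitoneOn (hf k x) (Set.Icc a b) := by
  apply antitoneOn_of_deriv_nonpos (convex_Icc a b)
  · intro t ht
    exact (hasDerivAt_hf k x t (by linarith [ht.1] : (0:ℝ) < t)).continuousAt.continuousWithinAt
  · rw [interior_Icc]
    intro t ht
    exact (hasDerivAt_hf k x t (by linarith [ht.1] : (0:ℝ) < t)).differentiableAt.differentiableWithinAt
  · rw [interior_Icc]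
    intro t ht
    have htpos : (0:ℝ) < t := by linarith [ht.1]
    rw [(hasDerivAt_hf k x t htpos).deriv]
    have hP : 0 ≤ Pf k (Real.log x - Real.log t) := hsign t (le_of_lt ht.1) (le_of_lt ht.2)
    apply div_nonpos_of_nonpos_of_nonneg (by linarith) (by positivity)

lemma mvt (k : ℕ) (x a b : ℝ) (h0 : 0 < a) (hab : a < b) :
    ∃ c ∈ Set.Ioo a b, Ff k x b - Ff k x a = (b - a) * hf k x c := by
  obtain ⟨c, hc, hceq⟩ := exists_hasDerivAt_eq_slope (Ff k x) (hf k x) hab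
    (fun t ht => (hasDerivAt_Ff k x t (lt_of_lt_of_le h0 ht.1)).continuousAt.continuousWithinAt)
    (fun t ht => hasDerivAt_Ff k x t (h0.trans ht.1))
  refine ⟨c, hc, ?_⟩
  rw [hceq, mul_comm]
  exact (div_mul_cancel₀ _ (sub_ne_zero.mpr hab.ne')).symm

lemma telescope (f g : ℕ → ℝ) (a : ℕ) :
    ∀ b, a ≤ b → (∀ n, a < n → n ≤ b → g n - g (n-1) ≤ f n) →
      g b - g a ≤ ∑ n ∈ Finset.Icc (a+1) b, f n := by
  intro b hab
  induction b, hab using Nat.le_induction with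
  | base => intro _; simp
  | succ b hab ih =>
    intro hstep
    rw [Finset.sum_Icc_succ_top (by omega : a+1 ≤ b+1)]
    have h1 := ih (fun n hn hnb => hstep n hn (by omega))
    have h2 := hstep (b+1) (by omega) le_rfl
    have hb1 : (b+1) - 1 = b := by omega
    rw [hb1] at h2
    linarith

end Stmt5Aux

open Stmt5Aux

set_option maxHeartbeats 1000000 in
theorem stmt_5 (x : ℝ) (hx : 1 ≤ x) (k : ℕ) :
    (∑ n ∈ Finset.Icc 1 ⌊x⌋₊,
      ((Real.log (n / x)) ^ (2 * k) / (Nat.factorial (2 * k) * Real.sqrt n)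
        - (Real.log (n / x)) ^ (2 * k + 2) / (Nat.factorial (2 * k + 2) * 4 * Real.sqrt n))) ≥ 0 := by
  classical
  have hx0 : (0:ℝ) < x := by linarith
  set N := ⌊x⌋₊ with hNdef
  have hN1 : 1 ≤ N := Nat.le_floor (by exact_mod_cast hx)
  have hNx : (N:ℝ) ≤ x := Nat.floor_le hx0.le
  have hxN : x < N + 1 := Nat.lt_floor_add_one x
  have hNreal : (1:ℝ) ≤ N := by exact_mod_cast hN1
  clear_value N
  -- rewrite the summand
  have hsum : (∑ n ∈ Finset.Icc 1 N,
      ((Real.log (n / x)) ^ (2 * k) / (Nat.factorial (2 * k) * Real.sqrt n)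
        - (Real.log (n / x)) ^ (2 * k + 2) / (Nat.factorial (2 * k + 2) * 4 * Real.sqrt n)))
      = ∑ n ∈ Finset.Icc 1 N, hf k x n := by
    apply Finset.sum_congr rfl
    intro n hn
    have hn1 : 1 ≤ n := (Finset.mem_Icc.mp hn).1
    have hnpos : (0:ℝ) < n := by exact_mod_cast hn1
    have hlog : Real.log ((n:ℝ) / x) = -(Real.log x - Real.log n) := by
      rw [Real.log_div hnpos.ne' hx0.ne']; ring
    rw [hlog, Even.neg_pow ⟨k, by ring⟩, Even.neg_pow ⟨k+1, by ring⟩, hf, Rf, sub_div,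
      div_div, div_div, mul_assoc]
  rw [hsum]
  -- main work
  set v := Real.log x with hvdef
  have hv0 : 0 ≤ v := Real.log_nonneg hx
  clear_value v
  have f0 := fact_pos' (2*k)
  have f1 := fact_pos' (2*k+1)
  have f2 := fact_pos' (2*k+2)
  -- F x = 0
  have hFx : Ff k x x = 0 := by
    rw [Ff, sub_self, Qf]
    norm_num
  -- u ≤ 1 for t ≥ N
  have hlog2 : Real.log 2 ≤ 1 := by
    have h1 : Real.log 2 ≤ Real.log (Real.exp 1) := by
      apply Real.log_le_log two_pos
      have := Real.exp_one_gt_d9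
      linarith
    rwa [Real.log_exp] at h1
  have hu_le_one : ∀ t : ℝ, (N:ℝ) ≤ t → Real.log x - Real.log t ≤ 1 := by
    intro t htN
    have hx2N : x ≤ 2 * N := by
      have : (1:ℝ) ≤ N := hNreal
      linarith
    have l1 : Real.log x ≤ Real.log (2 * N) := Real.log_le_log hx0 hx2N
    rw [Real.log_mul two_ne_zero (by positivity)] at l1
    have l2 : Real.log (N:ℝ) ≤ Real.log t := Real.log_le_log (by positivity) htN
    linarith
  -- the split point
  set Pr : ℕ → Prop := fun n => 1 ≤ n ∧ qf k (Real.log x - Real.log n) ≤ 0 with hPrdef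
  set m := Nat.findGreatest Pr (N-1) with hmdef
  have hmle : m ≤ N - 1 := Nat.findGreatest_le _
  have hPm_of : m ≠ 0 → Pr m := fun h0 => Nat.findGreatest_of_ne_zero hmdef.symm h0
  have hmax : ∀ j, m < j → j ≤ N-1 → ¬ Pr j := by
    intro j hj hjb
    rw [hmdef] at hj
    exact Nat.findGreatest_is_greatest hj hjb
  clear_value m
  have hmN : m + 1 ≤ N := by omega
  have hmNreal : (m:ℝ) + 1 ≤ N := by exact_mod_cast hmN
  -- antitone on [m+1, x]
  have hanti : AntitoneOn (hf k x) (Set.Icc ((m:ℝ)+1) x) := by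
    apply anti_region k x _ _ (by exact_mod_cast Nat.succ_le_succ (Nat.zero_le m))
    intro t ht1 htx
    rcases eq_or_lt_of_le htx with rfl | hlt
    · rw [sub_self]; exact Pf_zero_nonneg k
    have htpos : (0:ℝ) < t := by linarith
    have hu : 0 < Real.log x - Real.log t := by
      have := Real.log_lt_log htpos hlt
      linarith
    apply Pf_nonneg' k _ hu
    rcases le_or_gt (m+1) (N-1) with hcase | hcase
    · have hnot : ¬ Pr (m+1) := hmax (m+1) (by omega) hcase
      have hq1 : 0 < qf k (Real.log x - Real.log ((m:ℕ)+1 : ℕ)) := by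
        by_contra hcon
        exact hnot ⟨by omega, not_lt.mp hcon⟩
      have hcast : (((m:ℕ)+1 : ℕ) : ℝ) = (m:ℝ) + 1 := by push_cast; ring
      rw [hcast] at hq1
      apply le_of_lt
      apply qf_chain k _ _ hu _ hq1
      have : Real.log ((m:ℝ)+1) ≤ Real.log t := Real.log_le_log (by positivity) ht1
      linarith
    · -- m = N-1, so t ≥ N
      have hmeq : m = N - 1 := by omega
      have htN : (N:ℝ) ≤ t := by
        have hcast : ((m:ℝ) + 1) = (N:ℝ) := by
          rw [hmeq, Nat.cast_sub hN1]
          push_cast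
          ring
        linarith
      exact le_of_lt (qf_one_pos k _ hu (hu_le_one t htN))
  -- last piece: -F N ≤ h N
  have hNpos : (0:ℝ) < N := by positivity
  have hNmem : (N:ℝ) ∈ Set.Icc ((m:ℝ)+1) x := ⟨hmNreal, hNx⟩
  have hlast : -(Ff k x N) ≤ hf k x N := by
    rcases eq_or_lt_of_le hNx with hEq | hlt
    · rw [hEq, hFx, neg_zero, hf]
      apply div_nonneg _ (Real.sqrt_nonneg _)
      apply Rf_nonneg k _ (by simp) (by simp)
    · obtain ⟨c, hc, hceq⟩ := mvt k x (N:ℝ) x hNpos hlt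
      rw [hFx] at hceq
      have hcpos : (0:ℝ) < c := lt_trans hNpos hc.1
      have hhc_nonneg : 0 ≤ hf k x c := by
        rw [hf]
        apply div_nonneg _ (Real.sqrt_nonneg _)
        apply Rf_nonneg k _ _ (hu_le_one c (le_of_lt hc.1))
        have := Real.log_lt_log hcpos hc.2
        linarith
      have hcmem : c ∈ Set.Icc ((m:ℝ)+1) x := ⟨by linarith [hc.1, hmNreal], le_of_lt hc.2⟩
      have hmono_c : hf k x c ≤ hf k x N := hanti hNmem hcmem (le_of_lt hc.1)
      have hxN1 : x - (N:ℝ) ≤ 1 := by linarith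
      nlinarith
  -- decreasing telescope : F N - F (m+1) ≤ ∑_{n ∈ Icc (m+1) (N-1)} h n
  have hdec : Ff k x N - Ff k x ((m:ℝ)+1) ≤ ∑ n ∈ Finset.Icc (m+1) (N-1), hf k x n := by
    have := telescope (fun n => hf k x n) (fun n => Ff k x ((n:ℝ)+1)) m (N-1) (by omega) ?_
    · have hcast : ((N-1 : ℕ) : ℝ) + 1 = (N:ℝ) := by
        rw [Nat.cast_sub hN1]
        push_cast
        ring
      rwa [hcast] at this
    · intro n hn hnb
      have hn1 : 1 ≤ n := by omega
      have hcast : ((n-1 : ℕ) : ℝ) + 1 = (n:ℝ) := by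
        rw [Nat.cast_sub hn1]
        push_cast
        ring
      rw [hcast]
      have hnn1 : (n:ℝ) < (n:ℝ) + 1 := by linarith
      have hnpos : (0:ℝ) < n := by exact_mod_cast hn1
      obtain ⟨c, hc, hceq⟩ := mvt k x (n:ℝ) ((n:ℝ)+1) hnpos hnn1
      have hn1x : (n:ℝ) + 1 ≤ x := by
        have : n + 1 ≤ N := by omega
        have : ((n:ℝ) + 1) ≤ (N:ℝ) := by exact_mod_cast this
        linarith
      have hnm1 : (m:ℝ) + 1 ≤ (n:ℝ) := by exact_mod_cast Nat.succ_le_of_lt hn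
      have hcmem : c ∈ Set.Icc ((m:ℝ)+1) x := ⟨by linarith [hc.1], by linarith [hc.2]⟩
      have hnmem : (n:ℝ) ∈ Set.Icc ((m:ℝ)+1) x := ⟨hnm1, by linarith⟩
      have : hf k x c ≤ hf k x n := hanti hnmem hcmem (le_of_lt hc.1)
      nlinarith [hceq]
  -- sum splitting basics
  have hIcc1N : Finset.Icc 1 N = Finset.Ioc 0 N := by
    rw [show (1:ℕ) = 0 + 1 from rfl, Finset.Icc_add_one_left_eq_Ioc]
  have hIocN1 : Finset.Ioc (N-1) N = {N} := by
    rw [← Finset.Icc_add_one_left_eq_Ioc, Nat.sub_add_cancel hN1, Finset.Icc_self]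
  rcases Nat.eq_zero_or_pos m with hm0 | hmpos
  · -- m = 0 case
    have hdec0 : Ff k x N - Ff k x 1 ≤ ∑ n ∈ Finset.Icc 1 (N-1), hf k x n := by
      have := hdec
      rw [hm0] at this
      simpa using this
    have hsplit : ∑ n ∈ Finset.Ioc (0:ℕ) (N-1), hf k x (n:ℝ) + ∑ n ∈ Finset.Ioc (N-1) N, hf k x (n:ℝ)
        = ∑ n ∈ Finset.Ioc (0:ℕ) N, hf k x (n:ℝ) :=
      Finset.sum_Ioc_consecutive _ (by omega) (by omega)
    rw [hIcc1N, ← hsplit, hIocN1, Finset.sum_singleton]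
    have hIcc01 : Finset.Ioc 0 (N-1) = Finset.Icc 1 (N-1) := by
      rw [show (1:ℕ) = 0 + 1 from rfl, Finset.Icc_add_one_left_eq_Ioc]
    rw [hIcc01]
    have hF1 : Ff k x 1 = Qf k v := by
      rw [Ff, hvdef]
      norm_num [Real.sqrt_one]
    have hQv : Qf k v ≤ 0 := by
      rw [Qf]
      have : 0 ≤ v ^ (2*k+1) / (Nat.factorial (2*k+1)) + v ^ (2*k+2) / (Nat.factorial (2*k+2) * 2) := by
        positivity
      linarith
    linarith
  · -- m ≥ 1 case
    have hm1real : (1:ℝ) ≤ (m:ℝ) := by exact_mod_cast hmpos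
    have hPm : Pr m := hPm_of (by omega)
    have hmx : (m:ℝ) < x := by
      have : (m:ℝ) ≤ (N:ℝ) - 1 := by
        have : (m:ℝ) + 1 ≤ N := hmNreal
        linarith
      linarith
    -- monotone on [1, m]
    have hmono : MonotoneOn (hf k x) (Set.Icc (1:ℝ) (m:ℝ)) := by
      apply mono_region k x _ _ le_rfl hmx
      intro t ht1 htm
      have htpos : (0:ℝ) < t := by linarith
      have hum : 0 < Real.log x - Real.log (m:ℝ) := by
        have := Real.log_lt_log (by positivity : (0:ℝ) < (m:ℝ)) hmx
        linarith
      have hle : Real.log x - Real.log (m:ℝ) ≤ Real.log x - Real.log t := by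
        have : Real.log t ≤ Real.log (m:ℝ) := Real.log_le_log htpos htm
        linarith
      by_contra hcon
      push_neg at hcon
      have := qf_chain k _ _ hum hle hcon
      exact absurd hPm.2 (by linarith)
    -- increasing telescope : F m - F 1 ≤ ∑_{n ∈ Icc 2 m} h n
    have hinc : Ff k x (m:ℝ) - Ff k x 1 ≤ ∑ n ∈ Finset.Icc 2 m, hf k x n := by
      have := telescope (fun n => hf k x n) (fun n => Ff k x (n:ℝ)) 1 m hmpos ?_
      · simpa using this
      · intro n hn hnb
        have hcast : ((n-1 : ℕ) : ℝ) = (n:ℝ) - 1 := by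
          have h1n : 1 ≤ n := by omega
          push_cast [Nat.cast_sub h1n]
          ring
        rw [hcast]
        have hlt : (n:ℝ) - 1 < (n:ℝ) := by linarith
        have hpos1 : (0:ℝ) < (n:ℝ) - 1 := by
          have : (2:ℕ) ≤ n := by omega
          have : (2:ℝ) ≤ (n:ℝ) := by exact_mod_cast this
          linarith
        obtain ⟨c, hc, hceq⟩ := mvt k x ((n:ℝ)-1) (n:ℝ) hpos1 hlt
        have hnm : (n:ℝ) ≤ (m:ℝ) := by exact_mod_cast hnb
        have h2n : (2:ℝ) ≤ (n:ℝ) := by exact_mod_cast (by omega : 2 ≤ n)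
        have hcmem : c ∈ Set.Icc (1:ℝ) (m:ℝ) := ⟨by linarith [hc.1], by linarith [hc.2]⟩
        have hnmem : (n:ℝ) ∈ Set.Icc (1:ℝ) (m:ℝ) := ⟨by linarith, hnm⟩
        have : hf k x c ≤ hf k x n := hmono hcmem hnmem (le_of_lt hc.2)
        nlinarith [hceq]
    -- gap bound
    have hgap : Ff k x ((m:ℝ)+1) - Ff k x (m:ℝ) ≤ v^(2*k) / (Nat.factorial (2*k)) := by
      obtain ⟨c, hc, hceq⟩ := mvt k x (m:ℝ) ((m:ℝ)+1) (by positivity) (by linarith)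
      have hc1 : (1:ℝ) ≤ c := by linarith [hc.1]
      have hcx : c < x := by linarith [hc.2]
      have hu0 : 0 ≤ Real.log x - Real.log c := by
        have := Real.log_lt_log (by linarith : (0:ℝ) < c) hcx
        linarith
      have huv : Real.log x - Real.log c ≤ v := by
        have : 0 ≤ Real.log c := Real.log_nonneg hc1
        linarith
      have hsq1 : (1:ℝ) ≤ Real.sqrt c := Real.one_le_sqrt.mpr hc1
      have hbound : hf k x c ≤ v^(2*k) / (Nat.factorial (2*k)) := by
        rw [hf]
        rcases le_or_gt (Rf k (Real.log x - Real.log c)) 0 with hR0 | hR0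
        · have : Rf k (Real.log x - Real.log c) / Real.sqrt c ≤ 0 :=
            div_nonpos_of_nonpos_of_nonneg hR0 (Real.sqrt_nonneg _)
          have : (0:ℝ) ≤ v^(2*k) / (Nat.factorial (2*k)) := by positivity
          linarith
        · have hd1 : Rf k (Real.log x - Real.log c) / Real.sqrt c
              ≤ Rf k (Real.log x - Real.log c) := by
            apply div_le_self hR0.le hsq1
          have hd2 : Rf k (Real.log x - Real.log c)
              ≤ (Real.log x - Real.log c)^(2*k) / (Nat.factorial (2*k)) := by
            rw [Rf]
            have : 0 ≤ (Real.log x - Real.log c) ^ (2*k+2) / (Nat.factorial (2*k+2) * 4) := by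
              positivity
            linarith
          have hd3 : (Real.log x - Real.log c)^(2*k) / (Nat.factorial (2*k))
              ≤ v^(2*k) / (Nat.factorial (2*k)) := by
            exact (div_le_div_iff_of_pos_right f0).mpr (pow_le_pow_left₀ hu0 huv _)
          linarith
      nlinarith [hceq]
    -- slack
    have hslack : v^(2*k) / (Nat.factorial (2*k)) ≤ hf k x 1 - Ff k x 1 := by
      have hh1 : hf k x 1 = Rf k v := by
        rw [hf, hvdef]
        norm_num [Real.sqrt_one]
      have hF1 : Ff k x 1 = Qf k v := by
        rw [Ff, hvdef]
        norm_num [Real.sqrt_one]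
      rw [hh1, hF1]
      have hiden : Rf k v - Qf k v = v^(2*k) / (Nat.factorial (2*k))
          + v^(2*k+1) / (Nat.factorial (2*k+1)) + v^(2*k+2) / (Nat.factorial (2*k+2) * 4) := by
        rw [Rf, Qf]
        ring
      have : 0 ≤ v^(2*k+1) / (Nat.factorial (2*k+1)) + v^(2*k+2) / (Nat.factorial (2*k+2) * 4) := by
        positivity
      linarith
    -- assemble
    have hsplit1 : ∑ n ∈ Finset.Ioc (0:ℕ) 1, hf k x (n:ℝ) + ∑ n ∈ Finset.Ioc 1 m, hf k x (n:ℝ)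
        = ∑ n ∈ Finset.Ioc (0:ℕ) m, hf k x (n:ℝ) :=
      Finset.sum_Ioc_consecutive _ (by omega) (by omega)
    have hsplit2 : ∑ n ∈ Finset.Ioc (0:ℕ) m, hf k x (n:ℝ) + ∑ n ∈ Finset.Ioc m (N-1), hf k x (n:ℝ)
        = ∑ n ∈ Finset.Ioc (0:ℕ) (N-1), hf k x (n:ℝ) :=
      Finset.sum_Ioc_consecutive _ (by omega) (by omega)
    have hsplit3 : ∑ n ∈ Finset.Ioc (0:ℕ) (N-1), hf k x (n:ℝ) + ∑ n ∈ Finset.Ioc (N-1) N, hf k x (n:ℝ)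
        = ∑ n ∈ Finset.Ioc (0:ℕ) N, hf k x (n:ℝ) :=
      Finset.sum_Ioc_consecutive _ (by omega) (by omega)
    have hIoc01 : ∑ n ∈ Finset.Ioc (0:ℕ) 1, hf k x (n:ℝ) = hf k x ((1:ℕ):ℝ) := by
      rw [← Finset.Icc_add_one_left_eq_Ioc]
      norm_num
    have hIoc1m : Finset.Ioc 1 m = Finset.Icc 2 m := by
      rw [show (2:ℕ) = 1 + 1 from rfl, Finset.Icc_add_one_left_eq_Ioc]
    have hIocmN : Finset.Ioc m (N-1) = Finset.Icc (m+1) (N-1) := by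
      rw [Finset.Icc_add_one_left_eq_Ioc]
    rw [hIcc1N, ← hsplit3, ← hsplit2, ← hsplit1, hIoc01, hIoc1m, hIocmN, hIocN1,
      Finset.sum_singleton]
    push_cast
    push_cast at hslack hinc hgap hdec hlast
    linarith
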